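/- Let G be a finite connected d-regular graph with diameter diam(G) ≥ 2. Then there exist an initial distribution of tokens x_1 : V → ℕ and a round-fair balancer on G (with no self-loops) such that for every time step t the discrepancy satisfies max_{u∈V} x_t(u) − min_{u∈V} x_t(u) ≥ d·(diam(G) − 1). -/

import Mathlib

open Finset

/-- A `d`-regular connected symmetric graph `G` together with `dSelf` self-loops
attached to every node (the balancing graph `G⁺`). -/
structure LBSetup (V : Type) [Fintype V] [DecidableEq V] where
  d : ℕ
  dSelf : ℕ
  Adj : V → V → Bool
  symm : ∀ u v : V, Adj u v → Adj v u
  loopless : ∀ u : V, ¬ Adj u u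
  regular : ∀ u : V, (Finset.univ.filter fun v => Adj u v).card = d
  connected : ∀ u v : V, Relation.ReflTransGen (fun a b => Adj a b = true) u v

variable {V : Type} [Fintype V] [DecidableEq V]

/-- Degree `d⁺ = d + d°` of the balancing graph. -/
def LBSetup.dPlus (S : LBSetup V) : ℕ := S.d + S.dSelf

/-- Neighbours of `u` in the original graph. -/
def LBSetup.nbrs (S : LBSetup V) (u : V) : Finset V :=
  Finset.univ.filter fun v => S.Adj u v

/-- A load-balancing algorithm on the balancing graph `G⁺`: integer flows on
original edges (`f`) and on self-loops (`g`), and load vectors `x`, satisfying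
the conservation laws. Time steps start at `t = 1`. -/
structure LBAlgo (S : LBSetup V) where
  f : ℕ → V → V → ℕ
  g : ℕ → V → Fin S.dSelf → ℕ
  x : ℕ → V → ℕ
  flow_out : ∀ t, 1 ≤ t → ∀ u : V,
    x t u = (∑ v ∈ S.nbrs u, f t u v) + ∑ i : Fin S.dSelf, g t u i
  flow_in : ∀ t, 1 ≤ t → ∀ u : V,
    x (t + 1) u = (∑ v ∈ S.nbrs u, f t v u) + ∑ i : Fin S.dSelf, g t u i

/-- Cumulative flow on the original edge `(u, v)` up to time `t`. -/
def LBAlgo.F {S : LBSetup V} (A : LBAlgo S) (t : ℕ) (u v : V) : ℕ :=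
  ∑ τ ∈ Finset.Icc 1 t, A.f τ u v

/-- Cumulative flow on the `i`-th self-loop of `u` up to time `t`. -/
def LBAlgo.Gcum {S : LBSetup V} (A : LBAlgo S) (t : ℕ) (u : V) (i : Fin S.dSelf) : ℕ :=
  ∑ τ ∈ Finset.Icc 1 t, A.g τ u i

/-- Cumulative δ-fairness: every edge (original or self-loop) of `u` carries at least
`⌊x_t(u)/d⁺⌋` tokens in every step, and cumulative flows on any two original edges
of `u` differ by at most `δ`. -/
def CumFair (S : LBSetup V) (A : LBAlgo S) (δ : ℝ) : Prop :=
  (∀ t, 1 ≤ t → ∀ u : V,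
      (∀ v : V, S.Adj u v → A.x t u / S.dPlus ≤ A.f t u v) ∧
      (∀ i : Fin S.dSelf, A.x t u / S.dPlus ≤ A.g t u i)) ∧
  (∀ t : ℕ, ∀ u v w : V, S.Adj u v → S.Adj u w →
      |(A.F t u v : ℝ) - (A.F t u w : ℝ)| ≤ δ)

/-- Maximum load at time `t`. -/
def maxLoad {S : LBSetup V} [Nonempty V] (A : LBAlgo S) (t : ℕ) : ℕ :=
  Finset.univ.sup' Finset.univ_nonempty (A.x t)

/-- Minimum load at time `t`. -/
def minLoad {S : LBSetup V} [Nonempty V] (A : LBAlgo S) (t : ℕ) : ℕ :=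
  Finset.univ.inf' Finset.univ_nonempty (A.x t)

/-- Discrepancy at time `t`. -/
def disc {S : LBSetup V} [Nonempty V] (A : LBAlgo S) (t : ℕ) : ℕ :=
  maxLoad A t - minLoad A t

/-- Transition matrix `P` of the balancing graph `G⁺`. -/
noncomputable def LBSetup.P (S : LBSetup V) : Matrix V V ℝ :=
  Matrix.of fun u v =>
    if S.Adj u v then (1 : ℝ) / S.dPlus
    else if u = v then (S.dSelf : ℝ) / S.dPlus else 0

/-- `μ` is the eigenvalue gap of `P`: `μ = 1 - λ₂` where `λ₂` is the
largest eigenvalue of `P` different from `1`. -/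
def LBSetup.IsEigGap (S : LBSetup V) (μ : ℝ) : Prop :=
  ∃ lam : ℝ, μ = 1 - lam ∧ lam ∈ spectrum ℝ S.P ∧ lam ≠ 1 ∧
    ∀ x ∈ spectrum ℝ S.P, x ≠ 1 → x ≤ lam

/-- The underlying simple graph of the setup. -/
def LBSetup.toSimpleGraph (S : LBSetup V) : SimpleGraph V where
  Adj u v := S.Adj u v
  symm := ⟨fun u v h => S.symm u v h⟩
  loopless := ⟨fun u h => S.loopless u h⟩

/-- Ceiling division `⌈a / b⌉` on naturals. -/
def cdiv (a b : ℕ) : ℕ := (a + b - 1) / b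

/-- A round-fair balancer (on a graph without self-loops): in every step, every edge
outgoing from `u` carries either `⌊x_t(u)/d⌋` or `⌈x_t(u)/d⌉` tokens. -/
def RoundFair (S : LBSetup V) (A : LBAlgo S) : Prop :=
  ∀ t, 1 ≤ t → ∀ u v : V, S.Adj u v →
    A.f t u v = A.x t u / S.d ∨ A.f t u v = cdiv (A.x t u) S.d

private lemma disc_ge_of {V : Type} [Fintype V] [DecidableEq V] [Nonempty V] {S : LBSetup V}
    (A : LBAlgo S) (t c : ℕ) (u0 u1 : V) (h0 : A.x t u0 = 0) (h1 : c ≤ A.x t u1) :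
    c ≤ disc A t := by
  unfold disc maxLoad minLoad
  have hmin : Finset.univ.inf' Finset.univ_nonempty (A.x t) = 0 :=
    Nat.le_antisymm (h0 ▸ Finset.inf'_le _ (Finset.mem_univ u0)) (Nat.zero_le _)
  have hmax : c ≤ Finset.univ.sup' Finset.univ_nonempty (A.x t) :=
    le_trans h1 (Finset.le_sup' _ (Finset.mem_univ u1))
  omega

/-- **Theorem 3 (lower bound for round-fair balancers).** On every connected `d`-regular
graph of diameter at least `2` (with no self-loops added), there exist an initial token
distribution and a round-fair balancer whose discrepancy at every time step is at least
`d·(diam(G) − 1)`. -/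
theorem roundFair_lower_bound (V : Type) [Fintype V] [DecidableEq V] [Nonempty V]
    (S : LBSetup V) (hself : S.dSelf = 0)
    (hdiam : 2 ≤ S.toSimpleGraph.diam) :
    ∃ A : LBAlgo S, RoundFair S A ∧
      ∀ t, 1 ≤ t → S.d * (S.toSimpleGraph.diam - 1) ≤ disc A t := by
  classical
  set G := S.toSimpleGraph with hG
  have hconn : G.Connected := by
    constructor
    intro u v
    exact (SimpleGraph.reachable_iff_reflTransGen u v).mpr (S.connected u v)
  obtain ⟨u0, u1, hd01⟩ := SimpleGraph.exists_dist_eq_diam (G := G)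
  set h : V → ℕ := fun u => G.dist u0 u with hh
  -- basic facts
  have hAdjG : ∀ u v : V, S.Adj u v → G.Adj u v := fun u v hv => hv
  have hmem_nbrs : ∀ u v : V, v ∈ S.nbrs u ↔ S.Adj u v := by
    intro u v; simp [LBSetup.nbrs]
  have htri : ∀ u v : V, S.Adj u v → h u ≤ h v + 1 := by
    intro u v huv
    have h1 : G.dist v u = 1 := SimpleGraph.dist_eq_one_iff_adj.mpr ((hAdjG u v huv).symm)
    calc h u ≤ G.dist u0 v + G.dist v u := hconn.dist_triangle
      _ = h v + 1 := by rw [h1]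
  -- existence of a strictly closer neighbor
  have hclose : ∀ u : V, 1 ≤ h u → ∃ v : V, S.Adj u v ∧ h v < h u := by
    intro u hu
    obtain ⟨p, hp⟩ := ((hconn.preconnected u u0)).exists_walk_length_eq_dist
    have hplen : p.length = h u := by rw [hp, SimpleGraph.dist_comm]
    cases p with
    | nil => simp at hplen; omega
    | cons ha q =>
      rename_i v
      refine ⟨v, ha, ?_⟩
      have hdv : h v ≤ q.length := by
        show G.dist u0 v ≤ q.length
        rw [SimpleGraph.dist_comm]; exact SimpleGraph.dist_le q
      simp [SimpleGraph.Walk.length_cons] at hplen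
      omega
  -- the static load and flow
  set k : V → ℕ := fun u => ((S.nbrs u).filter (fun v => h v < h u)).card with hk
  set xv : V → ℕ := fun u => ∑ v ∈ S.nbrs u, min (h u) (h v) with hxv
  have hxk : ∀ u : V, xv u + k u = S.d * h u := by
    intro u
    have : ∀ v ∈ S.nbrs u, min (h u) (h v) + (if h v < h u then 1 else 0) = h u := by
      intro v hv
      have hadj := (hmem_nbrs u v).mp hv
      have := htri u v hadj
      by_cases hlt : h v < h u
      · simp [hlt]; omega
      · simp [hlt]; omega
    calc xv u + k u
        = ∑ v ∈ S.nbrs u, (min (h u) (h v) + (if h v < h u then 1 else 0)) := by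
          simp [hxv, hk, Finset.sum_add_distrib, Finset.sum_boole]
      _ = ∑ v ∈ S.nbrs u, h u := Finset.sum_congr rfl this
      _ = S.d * h u := by
          have hcard : (S.nbrs u).card = S.d := S.regular u
          rw [Finset.sum_const, hcard, smul_eq_mul, Nat.mul_comm]
  have hkle : ∀ u : V, k u ≤ S.d := by
    intro u
    calc k u ≤ (S.nbrs u).card := Finset.card_le_card (Finset.filter_subset _ _)
      _ = S.d := S.regular u
  -- the algorithm
  refine ⟨{ f := fun _ u v => min (h u) (h v), g := fun _ _ _ => 0,
            x := fun _ u => xv u,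
            flow_out := by intro t _ u; simp [hxv],
            flow_in := by
              intro t _ u
              simp only [Finset.sum_const_zero, add_zero]
              exact Finset.sum_congr rfl (fun v _ => by rw [min_comm]) }, ?_, ?_⟩
  · -- round fairness
    intro t _ u v huv
    show min (h u) (h v) = xv u / S.d ∨ min (h u) (h v) = cdiv (xv u) S.d
    by_cases h0 : h u = 0
    · left
      have hx0 : xv u = 0 := by
        have := hxk u; rw [h0] at this; omega
      rw [hx0, h0]
      simp
    · have hu1 : 1 ≤ h u := Nat.one_le_iff_ne_zero.mpr h0
      obtain ⟨w, hw, hwlt⟩ := hclose u hu1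
      have hk1 : 1 ≤ k u := by
        have : w ∈ (S.nbrs u).filter (fun v => h v < h u) := by
          rw [Finset.mem_filter, hmem_nbrs]; exact ⟨hw, hwlt⟩
        exact Finset.card_pos.mpr ⟨w, this⟩
      have hd1 : 1 ≤ S.d := le_trans hk1 (hkle u)
      have hxku := hxk u
      have hku := hkle u
      obtain ⟨m, hm⟩ : ∃ m, h u = m + 1 := ⟨h u - 1, by omega⟩
      have e0 : S.d * h u = S.d * m + S.d := by rw [hm]; ring
      have e1 : m * S.d = S.d * m := Nat.mul_comm m S.d
      have e2 : Nat.succ m * S.d = S.d * m + S.d := by rw [Nat.succ_mul]; ring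
      have e3 : (m + 1) * S.d = S.d * m + S.d := by ring
      have e4 : Nat.succ (m + 1) * S.d = S.d * m + S.d + S.d := by
        rw [Nat.succ_mul]; ring
      by_cases hlt : h v < h u
      · left
        have hdiv : xv u / S.d = m := by
          refine Nat.div_eq_of_lt_le (by omega) (by omega)
        rw [hdiv]
        have := htri u v huv
        omega
      · right
        have hkd : k u < S.d := by
          have hsub : (S.nbrs u).filter (fun z => h z < h u) ⊂ S.nbrs u := by
            refine ⟨Finset.filter_subset _ _, fun hs => ?_⟩
            have hv : v ∈ S.nbrs u := (hmem_nbrs u v).mpr huv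
            have := (Finset.mem_filter.mp (hs hv)).2
            omega
          calc k u < (S.nbrs u).card := Finset.card_lt_card hsub
            _ = S.d := S.regular u
        have hdiv : cdiv (xv u) S.d = m + 1 := by
          unfold cdiv
          obtain ⟨r, hr, hre⟩ : ∃ r, r < S.d ∧ xv u + S.d - 1 = S.d * (m + 1) + r := by
            refine ⟨xv u + S.d - 1 - S.d * (m + 1), ?_, ?_⟩ <;>
            · have e5 : S.d * (m + 1) = S.d * m + S.d := by ring
              omega
          rw [hre, Nat.mul_add_div hd1, Nat.div_eq_of_lt hr, Nat.add_zero]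
        rw [hdiv]
        omega
  · -- discrepancy bound
    intro t _
    have hx0 : xv u0 = 0 := by
      have h00 : h u0 = 0 := by simp [hh]
      have := hxk u0; rw [h00] at this; omega
    have hx1 : S.d * (G.diam - 1) ≤ xv u1 := by
      have h2 : h u1 = G.diam := hd01
      have hxk1 : xv u1 + k u1 = S.d * G.diam := by rw [← h2]; exact hxk u1
      have hkle1 := hkle u1
      have hd2 : 2 ≤ G.diam := hdiam
      have e1 : S.d * G.diam = S.d * (G.diam - 1) + S.d := by
        have hda : G.diam - 1 + 1 = G.diam := by omega
        calc S.d * G.diam = S.d * (G.diam - 1 + 1) := by rw [hda]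
          _ = S.d * (G.diam - 1) + S.d := by ring
      omega
    exact disc_ge_of _ t _ u0 u1 hx0 hx1
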